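/- Let A, B be invertible endomorphisms of a finite-dimensional complex vector space with AB = q^2 BA, where q^2 is a primitive N-th root of unity and q^N = (-1)^{N+1}, and with A^N = x Id, B^N = y Id for scalars x, y. Then: (A^{-1})^N = x^{-1} Id; ((1+qA)B)^N = (1+x) y Id; and ((1+qA^{-1})^{-1} B)^N = (1+x^{-1})^{-1} y Id, the latter provided 1 + x^{-1} ≠ 0 (which guarantees 1 + qA^{-1} is invertible). -/

import Mathlib

open Polynomial

private lemma qcomm_pow' {R : Type*} [Ring R] [Algebra ℂ R] {A₀ B₀ : R} {c : ℂ}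
    (h : A₀ * B₀ = c • (B₀ * A₀)) (n : ℕ) :
    A₀ ^ n * B₀ = c ^ n • (B₀ * A₀ ^ n) := by
  induction n with
  | zero => simp
  | succ n ih =>
    calc A₀ ^ (n+1) * B₀ = A₀ ^ n * (A₀ * B₀) := by rw [pow_succ, mul_assoc]
    _ = A₀ ^ n * (c • (B₀ * A₀)) := by rw [h]
    _ = c • (A₀ ^ n * B₀ * A₀) := by rw [mul_smul_comm, mul_assoc]
    _ = c • ((c ^ n • (B₀ * A₀ ^ n)) * A₀) := by rw [ih]
    _ = c ^ (n+1) • (B₀ * A₀ ^ (n+1)) := by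
        rw [smul_mul_assoc, smul_smul, mul_assoc, ← pow_succ, ← pow_succ']

private lemma kc1 {R : Type*} [Ring R] [Algebra ℂ R] {A₀ B₀ : R} {c : ℂ}
    (h : A₀ * B₀ = c • (B₀ * A₀)) (r : ℂ[X]) :
    aeval A₀ r * B₀ = B₀ * aeval A₀ (r.comp (C c * X)) := by
  induction r using Polynomial.induction_on' with
  | add p q hp hq => simp only [map_add, add_mul, mul_add, add_comp, hp, hq]
  | monomial n a =>
    rw [aeval_monomial, ← C_mul_X_pow_eq_monomial, mul_comp, C_comp, pow_comp, X_comp,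
      mul_pow, ← C_pow, ← mul_assoc, ← C_mul]
    rw [Algebra.algebraMap_eq_smul_one, smul_mul_assoc, one_mul, smul_mul_assoc,
      qcomm_pow' h n]
    rw [map_mul, aeval_C, aeval_X_pow, Algebra.algebraMap_eq_smul_one,
      smul_mul_assoc, one_mul, mul_smul_comm, smul_smul, mul_comm a (c^n)]

private lemma hcomp_aeval (c : ℂ) (s : ℂ[X]) :
    s.comp (C c * X) = aeval (C c * X) s := by
  rw [comp, aeval_def, Polynomial.algebraMap_eq]

private lemma gl {R : Type*} [Ring R] [Algebra ℂ R] {A₀ B₀ : R} {c : ℂ}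
    (h : A₀ * B₀ = c • (B₀ * A₀)) (r : ℂ[X]) (m : ℕ) :
    (aeval A₀ r * B₀) ^ m
      = B₀ ^ m * aeval A₀ (∏ j ∈ Finset.range m,
          (fun s : ℂ[X] => s.comp (C c * X))^[j+1] r) := by
  induction m with
  | zero => simp
  | succ m ih =>
    rw [pow_succ, ih, mul_assoc, ← mul_assoc (aeval A₀ _), ← map_mul, kc1 h,
      ← mul_assoc, ← pow_succ]
    congr 2
    rw [Finset.prod_range_succ']
    have step : (∏ j ∈ Finset.range m, (fun s : ℂ[X] => s.comp (C c * X))^[j+1] r).comp (C c * X)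
        = ∏ j ∈ Finset.range m, (fun s : ℂ[X] => s.comp (C c * X))^[j+1+1] r := by
      rw [hcomp_aeval, map_prod]
      refine Finset.prod_congr rfl fun j _ => ?_
      rw [Function.iterate_succ_apply' (fun s : ℂ[X] => s.comp (C c * X)) (j+1) r, ← hcomp_aeval]
    rw [mul_comp, step, Function.iterate_one]

private lemma scalarId {N : ℕ} (hN : 0 < N) (q : ℂ)
    (hq : IsPrimitiveRoot (q ^ 2) N) (hqN : q ^ N = (-1 : ℂ) ^ (N + 1)) (t : ℂ) :
    ∏ k ∈ Finset.range N, (1 + q ^ (2*k+1) * t) = 1 + t ^ N := by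
  have hq2 : (q ^ 2) ^ N = 1 := hq.pow_eq_one
  have hq0 : q ≠ 0 := by
    intro h; rw [h] at hq2; simp [zero_pow hN.ne', zero_pow (two_ne_zero)] at hq2
  by_cases ht : t = 0
  · simp [ht, zero_pow hN.ne']
  · have hqt : q * t ≠ 0 := mul_ne_zero hq0 ht
    have H := X_pow_sub_C_eq_prod hq hN (one_pow N)
    have H' := congrArg (eval (-(q*t)⁻¹)) H
    simp only [eval_sub, eval_pow, eval_X, eval_C, eval_prod, eval_one, mul_one] at H'
    have key : ∀ k ∈ Finset.range N, (1 + q ^ (2*k+1) * t)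
        = (-(q*t)) * ((-(q*t)⁻¹) - (q^2)^k) := by
      intro k _
      field_simp
      ring_nf
    rw [Finset.prod_congr rfl key, Finset.prod_mul_distrib, Finset.prod_const,
      Finset.card_range, ← H']
    have hNexp : (-(q*t))^N * ((-(q*t)⁻¹)^N - 1) = 1 - (-(q*t))^N := by
      have : (-(q*t))^N * (-(q*t)⁻¹)^N = 1 := by
        rw [← mul_pow]; field_simp; exact one_pow N
      rw [mul_sub, this, mul_one]
    rw [hNexp]
    have hsgn : (-1:ℂ)^N * (-1:ℂ)^(N+1) = -1 := by
      rw [← pow_add]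
      have : N + (N+1) = 2*N + 1 := by ring
      rw [this, pow_add, pow_mul]
      norm_num
    have : (-(q*t))^N = -t^N := by
      rw [neg_pow, mul_pow, hqN, ← mul_assoc, hsgn]
      ring
    rw [this]; ring

/-- The basic linear factor `1 + q^(2k+1) X`. -/
private noncomputable def pp (q : ℂ) (k : ℕ) : ℂ[X] := 1 + C (q ^ (2*k+1)) * X

private lemma PI {N : ℕ} (hN : 0 < N) (q : ℂ)
    (hq : IsPrimitiveRoot (q ^ 2) N) (hqN : q ^ N = (-1 : ℂ) ^ (N + 1)) :
    ∏ k ∈ Finset.range N, pp q k = 1 + X ^ N := by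
  apply Polynomial.funext
  intro t
  rw [eval_prod]
  simp only [pp, eval_add, eval_one, eval_mul, eval_C, eval_X, eval_pow]
  exact scalarId hN q hq hqN t

private lemma pp_comp_up (q : ℂ) (k : ℕ) :
    (pp q k).comp (C (q^2) * X) = pp q (k+1) := by
  have h : q^(2*k+1) * q^2 = q^(2*(k+1)+1) := by
    rw [← pow_add]; congr 1
  simp only [pp, add_comp, one_comp, mul_comp, C_comp, X_comp]
  rw [← mul_assoc, ← C_mul, h]

private lemma pp_comp_down (q : ℂ) (hq0 : q ≠ 0) (k : ℕ) :
    (pp q (k+1)).comp (C (q^2)⁻¹ * X) = pp q k := by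
  have hq2ne : (q^2 : ℂ) ≠ 0 := pow_ne_zero _ hq0
  have h2 : q^(2*k+1) * q^2 = q^(2*(k+1)+1) := by
    rw [← pow_add]; congr 1
  have h : q^(2*(k+1)+1) * (q^2)⁻¹ = q^(2*k+1) := by
    rw [← h2, mul_assoc, mul_inv_cancel₀ hq2ne, mul_one]
  simp only [pp, add_comp, one_comp, mul_comp, C_comp, X_comp]
  rw [← mul_assoc, ← C_mul, h]

private lemma pp_comp_down0 {N : ℕ} (hN : 0 < N) (q : ℂ) (hq0 : q ≠ 0)
    (hq2 : (q ^ 2) ^ N = 1) :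
    (pp q 0).comp (C (q^2)⁻¹ * X) = pp q (N-1) := by
  have hq2ne : (q^2 : ℂ) ≠ 0 := pow_ne_zero _ hq0
  have e1 : q^(2*(N-1)+1) * q^2 = q^(2*0+1) := by
    calc q^(2*(N-1)+1) * q^2 = q^(2*N+1) := by rw [← pow_add]; congr 1; omega
    _ = (q^2)^N * q := by rw [pow_succ, pow_mul]
    _ = q := by rw [hq2, one_mul]
    _ = q^(2*0+1) := by norm_num
  have h : q^(2*0+1) * (q^2)⁻¹ = q^(2*(N-1)+1) := by
    rw [← e1, mul_assoc, mul_inv_cancel₀ hq2ne, mul_one]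
  simp only [pp, add_comp, one_comp, mul_comp, C_comp, X_comp]
  rw [← mul_assoc, ← C_mul, h]

private lemma iter_up (q : ℂ) (j : ℕ) :
    (fun s : ℂ[X] => s.comp (C (q^2) * X))^[j] (pp q 0) = pp q j := by
  induction j with
  | zero => rfl
  | succ j ih =>
    rw [Function.iterate_succ_apply', ih]
    exact pp_comp_up q j

private lemma iter_down {N : ℕ} (hN : 0 < N) (q : ℂ) (hq0 : q ≠ 0)
    (hq2 : (q ^ 2) ^ N = 1) :
    ∀ j, j < N →
      (fun s : ℂ[X] => s.comp (C (q^2)⁻¹ * X))^[j+1] (pp q 0) = pp q (N-1-j) := by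
  intro j
  induction j with
  | zero =>
    intro _
    rw [Function.iterate_one]
    simpa using pp_comp_down0 hN q hq0 hq2
  | succ j ih =>
    intro hj
    rw [Function.iterate_succ_apply', ih (by omega)]
    have h1 : N-1-j = (N-1-(j+1))+1 := by omega
    rw [h1]
    exact pp_comp_down q hq0 _

private lemma iter_mul (c : ℂ) (i : ℕ) (a b : ℂ[X]) :
    (fun s : ℂ[X] => s.comp (C c * X))^[i] (a*b)
      = (fun s : ℂ[X] => s.comp (C c * X))^[i] a
        * (fun s : ℂ[X] => s.comp (C c * X))^[i] b := by
  induction i generalizing a b with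
  | zero => rfl
  | succ i ih => rw [Function.iterate_succ_apply, Function.iterate_succ_apply,
      Function.iterate_succ_apply]
                 simp only [mul_comp]
                 exact ih _ _

private lemma aeval_pp0 {R : Type*} [Ring R] [Algebra ℂ R] (q : ℂ) (T : R) :
    aeval T (pp q 0) = 1 + q • T := by
  simp [pp, Algebra.smul_def]

private lemma pow_split {M : Type*} [Monoid M] {N : ℕ} (hN : 0 < N) (z : M) :
    z ^ N = z * z ^ (N-1) := by
  conv_lhs => rw [← Nat.succ_pred_eq_of_pos hN]
  rw [pow_succ']
  rfl

/-- Diagonal-exchange identities for a quantum-plane pair at a root of unity: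
`(A⁻¹)^N = x⁻¹ Id`, `((1+qA)B)^N = (1+x) y Id`, and, when `1 + x⁻¹ ≠ 0`,
`1 + q A⁻¹` is invertible and `((1+qA⁻¹)⁻¹ B)^N = (1+x⁻¹)⁻¹ y Id`. -/
theorem diagonal_exchange_identities {N : ℕ} (hN : 0 < N) (q : ℂ)
    (hq : IsPrimitiveRoot (q ^ 2) N) (hqN : q ^ N = (-1 : ℂ) ^ (N + 1))
    {V : Type*} [AddCommGroup V] [Module ℂ V] [FiniteDimensional ℂ V]
    (A B : Module.End ℂ V) (hA : IsUnit A) (hB : IsUnit B)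
    (hAB : A * B = (q ^ 2) • (B * A)) (x y : ℂ)
    (hAN : A ^ N = x • (1 : Module.End ℂ V))
    (hBN : B ^ N = y • (1 : Module.End ℂ V)) :
    (Ring.inverse A) ^ N = x⁻¹ • (1 : Module.End ℂ V) ∧
    ((1 + q • A) * B) ^ N = ((1 + x) * y) • (1 : Module.End ℂ V) ∧
    (1 + x⁻¹ ≠ 0 →
      IsUnit (1 + q • Ring.inverse A) ∧
      (Ring.inverse (1 + q • Ring.inverse A) * B) ^ N
        = ((1 + x⁻¹)⁻¹ * y) • (1 : Module.End ℂ V)) := by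
  rcases subsingleton_or_nontrivial (Module.End ℂ V) with hss | hnt
  · exact ⟨Subsingleton.elim _ _, Subsingleton.elim _ _,
      fun _ => ⟨isUnit_of_subsingleton _, Subsingleton.elim _ _⟩⟩
  have hq2 : (q ^ 2) ^ N = 1 := hq.pow_eq_one
  have hq0 : q ≠ 0 := by
    intro h; rw [h] at hq2; simp [zero_pow hN.ne', zero_pow (two_ne_zero)] at hq2
  have hx : x ≠ 0 := by
    intro h
    rw [h, zero_smul] at hAN
    have := hA.pow N
    rw [hAN] at this
    exact zero_ne_one (isUnit_zero_iff.mp this)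
  set A' := Ring.inverse A with hA'def
  have hA'A : A' * A = 1 := Ring.inverse_mul_cancel A hA
  have hAA' : A * A' = 1 := Ring.mul_inverse_cancel A hA
  -- Part 1
  have hu1 : (x • (1 : Module.End ℂ V)) * (x⁻¹ • 1) = 1 := by
    rw [smul_mul_assoc, one_mul, smul_smul, mul_inv_cancel₀ hx, one_smul]
  have hu1' : (x⁻¹ • (1 : Module.End ℂ V)) * (x • 1) = 1 := by
    rw [smul_mul_assoc, one_mul, smul_smul, inv_mul_cancel₀ hx, one_smul]
  have part1 : A' ^ N = x⁻¹ • (1 : Module.End ℂ V) := by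
    rw [hA'def, Ring.inverse_pow, hAN]
    exact Ring.inverse_unit ⟨x • 1, x⁻¹ • 1, hu1, hu1'⟩
  refine ⟨part1, ?_, ?_⟩
  -- Part 2
  · have h2 := gl hAB (pp q 0) N
    have hprod2 : ∏ j ∈ Finset.range N,
        (fun s : ℂ[X] => s.comp (C (q^2) * X))^[j+1] (pp q 0) = 1 + X^N := by
      have e1 : ∀ j ∈ Finset.range N,
          (fun s : ℂ[X] => s.comp (C (q^2) * X))^[j+1] (pp q 0) = pp q (j+1) :=
        fun j _ => iter_up q (j+1)
      rw [Finset.prod_congr rfl e1]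
      have e2 : ∏ j ∈ Finset.range N, pp q (j+1)
          = (∏ j ∈ Finset.range N, pp q j).comp (C (q^2) * X) := by
        rw [hcomp_aeval, map_prod]
        exact (Finset.prod_congr rfl fun j _ => by
          rw [← hcomp_aeval, pp_comp_up]).symm
      rw [e2, PI hN q hq hqN, add_comp, one_comp, pow_comp, X_comp, mul_pow,
        ← C_pow, hq2, map_one, one_mul]
    rw [← aeval_pp0 q A, h2, hprod2, map_add, map_one, aeval_X_pow, hAN, hBN]
    rw [mul_add, mul_one, smul_mul_assoc, one_mul, smul_smul,
      show (1+x)*y = y + y*x from by ring, add_smul]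
  -- Part 3
  · intro hc
    have hBA' : B * A' = (q^2) • (A' * B) := by
      calc B * A' = (A' * A) * B * A' := by rw [hA'A, one_mul]
      _ = A' * (A * B) * A' := by rw [mul_assoc A' A B]
      _ = A' * ((q^2) • (B * A)) * A' := by rw [hAB]
      _ = (q^2) • (A' * (B * A) * A') := by rw [mul_smul_comm, smul_mul_assoc]
      _ = (q^2) • (A' * B * (A * A')) := by rw [mul_assoc, mul_assoc, mul_assoc]
      _ = (q^2) • (A' * B) := by rw [hAA', mul_one]
    have hq2ne : (q^2 : ℂ) ≠ 0 := pow_ne_zero _ hq0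
    have hA'B : A' * B = ((q^2)⁻¹ : ℂ) • (B * A') := by
      rw [hBA', smul_smul, inv_mul_cancel₀ hq2ne, one_smul]
    have haevP' : aeval A' ((1:ℂ[X]) + X^N) = (1 + x⁻¹) • (1 : Module.End ℂ V) := by
      rw [map_add, map_one, aeval_X_pow, part1, add_smul, one_smul]
    have hw : pp q 0 * ∏ k ∈ (Finset.range N).erase 0, pp q k = 1 + X^N := by
      rw [Finset.mul_prod_erase _ _ (Finset.mem_range.mpr hN), PI hN q hq hqN]
    set w : ℂ[X] := ∏ k ∈ (Finset.range N).erase 0, pp q k with hwdef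
    set E₀ := aeval A' (pp q 0) with hE₀def
    set Q₀ := aeval A' w with hQ₀def
    have hEQ : E₀ * Q₀ = (1+x⁻¹) • (1 : Module.End ℂ V) := by
      rw [hE₀def, hQ₀def, ← map_mul, hw, haevP']
    have hQE : Q₀ * E₀ = (1+x⁻¹) • (1 : Module.End ℂ V) := by
      rw [hE₀def, hQ₀def, ← map_mul, mul_comm w, hw, haevP']
    have hu2 : E₀ * ((1+x⁻¹)⁻¹ • Q₀) = 1 := by
      rw [mul_smul_comm, hEQ, smul_smul, inv_mul_cancel₀ hc, one_smul]
    have hu2' : ((1+x⁻¹)⁻¹ • Q₀) * E₀ = 1 := by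
      rw [smul_mul_assoc, hQE, smul_smul, inv_mul_cancel₀ hc, one_smul]
    have hE0 : E₀ = 1 + q • A' := aeval_pp0 q A'
    have hunit : IsUnit (1 + q • A') := by
      rw [← hE0]
      exact ⟨⟨E₀, (1+x⁻¹)⁻¹ • Q₀, hu2, hu2'⟩, rfl⟩
    refine ⟨hunit, ?_⟩
    have hRinv : Ring.inverse (1 + q • A') = (1+x⁻¹)⁻¹ • Q₀ := by
      rw [← hE0]
      exact Ring.inverse_unit ⟨E₀, (1+x⁻¹)⁻¹ • Q₀, hu2, hu2'⟩
    rw [hRinv, smul_mul_assoc, _root_.smul_pow]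
    have h3 := gl hA'B w N
    have hp0prod : ∏ j ∈ Finset.range N,
        (fun s : ℂ[X] => s.comp (C (q^2)⁻¹ * X))^[j+1] (pp q 0) = 1 + X^N := by
      rw [Finset.prod_congr rfl
        (fun j hj => iter_down hN q hq0 hq2 j (Finset.mem_range.mp hj))]
      rw [Finset.prod_range_reflect (fun j => pp q j) N]
      exact PI hN q hq hqN
    have hPne : ((1:ℂ[X]) + X^N) ≠ 0 := by
      intro h0
      have := congrArg (eval 0) h0
      simp [zero_pow hN.ne'] at this
    have hΦfix : ((1:ℂ[X]) + X^N).comp (C (q^2)⁻¹ * X) = 1 + X^N := by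
      rw [add_comp, one_comp, pow_comp, X_comp, mul_pow, ← C_pow, inv_pow, hq2,
        inv_one, map_one, one_mul]
    have hfix_iter : ∀ i, (fun s : ℂ[X] => s.comp (C (q^2)⁻¹ * X))^[i] (1 + X^N)
        = 1 + X^N := fun i => Function.iterate_fixed
          (f := fun s : ℂ[X] => s.comp (C (q^2)⁻¹ * X)) (x := 1 + X^N) hΦfix i
    have hwprod : ∏ j ∈ Finset.range N,
        (fun s : ℂ[X] => s.comp (C (q^2)⁻¹ * X))^[j+1] w = (1 + X^N)^(N-1) := by
      have hmm : ((1:ℂ[X])+X^N) * ∏ j ∈ Finset.range N,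
          (fun s : ℂ[X] => s.comp (C (q^2)⁻¹ * X))^[j+1] w
          = (1+X^N) * (1+X^N)^(N-1) := by
        calc ((1:ℂ[X])+X^N) * ∏ j ∈ Finset.range N,
            (fun s : ℂ[X] => s.comp (C (q^2)⁻¹ * X))^[j+1] w
            = (∏ j ∈ Finset.range N,
                (fun s : ℂ[X] => s.comp (C (q^2)⁻¹ * X))^[j+1] (pp q 0))
              * ∏ j ∈ Finset.range N,
                (fun s : ℂ[X] => s.comp (C (q^2)⁻¹ * X))^[j+1] w := by rw [hp0prod]
          _ = ∏ j ∈ Finset.range N,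
                ((fun s : ℂ[X] => s.comp (C (q^2)⁻¹ * X))^[j+1] (pp q 0)
                  * (fun s : ℂ[X] => s.comp (C (q^2)⁻¹ * X))^[j+1] w) :=
            (Finset.prod_mul_distrib).symm
          _ = ∏ j ∈ Finset.range N,
                (fun s : ℂ[X] => s.comp (C (q^2)⁻¹ * X))^[j+1] (pp q 0 * w) :=
            Finset.prod_congr rfl fun j _ => (iter_mul _ _ _ _).symm
          _ = ∏ j ∈ Finset.range N, ((1:ℂ[X]) + X^N) :=
            Finset.prod_congr rfl fun j _ => by rw [hw, hfix_iter]
          _ = (1+X^N)^N := by rw [Finset.prod_const, Finset.card_range]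
          _ = (1+X^N) * (1+X^N)^(N-1) := pow_split hN _
      exact mul_left_cancel₀ hPne hmm
    have key : ((1+x⁻¹)⁻¹)^N * (1+x⁻¹)^(N-1) = (1+x⁻¹)⁻¹ := by
      have h1 : ((1+x⁻¹)⁻¹)^N = (1+x⁻¹)⁻¹ * ((1+x⁻¹)^(N-1))⁻¹ := by
        rw [inv_pow, pow_split hN (1+x⁻¹), mul_inv]
      rw [h1, mul_assoc, inv_mul_cancel₀ (pow_ne_zero _ hc), mul_one]
    rw [hQ₀def, h3, hwprod, map_pow, haevP', hBN]
    rw [_root_.smul_pow, one_pow, mul_smul_comm, mul_one, smul_smul, smul_smul]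
    congr 1
    rw [key]
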